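/- arXiv:2604.05618 — 4 statements merged into one kernel-verified Lean document; each statement's English description precedes it below -/
import Mathlib

section
/- Let G be a finite abelian group, H a subgroup of G, g ∈ G, and let r be the order of the image of g in the quotient group G/H. Then for every z ∈ ℂ, the product over all group homomorphisms χ : G → ℂˣ that are trivial on H of (1 − χ(g)·z) equals (1 − z^r)^{([G : H])/r}. -/
open Finset Polynomial

lemma prod_nthRoots_one_sub_mul (r : ℕ) (hr : 0 < r) (z : ℂ) :
    ∏ ζ ∈ nthRootsFinset r (1 : ℂ), (1 - ζ * z) = 1 - z ^ r := by
  have hprim := Complex.isPrimitiveRoot_exp r hr.ne'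
  have key : ∀ w : ℂ, w ^ r - 1 = ∏ ζ ∈ nthRootsFinset r (1 : ℂ), (w - ζ) := by
    intro w
    have := congrArg (eval w) (X_pow_sub_one_eq_prod hr hprim)
    simpa [eval_prod] using this
  have hne : ∀ ζ ∈ nthRootsFinset r (1 : ℂ), ζ ≠ 0 := by
    intro ζ hζ h0
    have := (mem_nthRootsFinset hr (1 : ℂ)).mp hζ
    rw [h0, zero_pow hr.ne'] at this
    exact zero_ne_one this
  have hneg : ∏ ζ ∈ nthRootsFinset r (1 : ℂ), (-ζ) = (-1 : ℂ) := by
    have h0 := key 0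
    rw [zero_pow hr.ne', zero_sub] at h0
    simpa [zero_sub] using h0.symm
  have hfac : ∀ ζ ∈ nthRootsFinset r (1 : ℂ), (1 - ζ * z) = (-ζ) * (z - ζ⁻¹) := by
    intro ζ hζ
    have h0 := hne ζ hζ
    field_simp
    ring
  have hinv : ∏ ζ ∈ nthRootsFinset r (1 : ℂ), (z - ζ⁻¹) = ∏ ζ ∈ nthRootsFinset r (1 : ℂ), (z - ζ) := by
    refine Finset.prod_nbij' (fun ζ => ζ⁻¹) (fun ζ => ζ⁻¹) ?_ ?_ ?_ ?_ ?_
    · intro ζ hζ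
      rw [mem_nthRootsFinset hr] at hζ ⊢
      rw [inv_pow, hζ, inv_one]
    · intro ζ hζ
      rw [mem_nthRootsFinset hr] at hζ ⊢
      rw [inv_pow, hζ, inv_one]
    · intro ζ _; simp
    · intro ζ _; simp
    · intro ζ _; simp
  calc ∏ ζ ∈ nthRootsFinset r (1 : ℂ), (1 - ζ * z)
      = ∏ ζ ∈ nthRootsFinset r (1 : ℂ), ((-ζ) * (z - ζ⁻¹)) := Finset.prod_congr rfl hfac
    _ = (∏ ζ ∈ nthRootsFinset r (1 : ℂ), (-ζ)) * ∏ ζ ∈ nthRootsFinset r (1 : ℂ), (z - ζ⁻¹) :=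
        Finset.prod_mul_distrib
    _ = (-1) * (z ^ r - 1) := by rw [hneg, hinv, ← key]
    _ = 1 - z ^ r := by ring

/-- For a finite abelian group `K` and a character `ψ : K →* ℂˣ` of order `r`,
`∏ x, (1 - ψ x * z) = (1 - z ^ r) ^ (|K| / r)`. -/
lemma prod_one_sub_char {K : Type*} [CommGroup K] [Fintype K] (ψ : K →* ℂˣ) (z : ℂ) :
    ∏ x : K, (1 - ((ψ x : ℂˣ) : ℂ) * z)
      = (1 - z ^ orderOf ψ) ^ (Fintype.card K / orderOf ψ) := by
  classical
  set r := orderOf ψ with hrdef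
  have hψcard : ψ ^ Fintype.card K = 1 := by
    ext x
    simp only [MonoidHom.pow_apply, MonoidHom.one_apply, ← map_pow, pow_card_eq_one, map_one,
      Units.val_one]
  have hr0 : 0 < r :=
    Or.resolve_right (Nat.eq_zero_or_pos r).symm fun h => by
      have := orderOf_eq_zero_iff.mp h
      exact this (isOfFinOrder_iff_pow_eq_one.mpr ⟨Fintype.card K, Fintype.card_pos, hψcard⟩)
  set N := ψ.ker with hN
  -- the lifted injective character on the quotient
  set ψ' := QuotientGroup.kerLift ψ with hψ'
  have hinj : Function.Injective ψ' := QuotientGroup.kerLift_injective ψ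
  have hQcard : Nat.card (K ⧸ N) = r := by
    rw [Nat.card_congr (QuotientGroup.quotientKerEquivRange ψ).toEquiv]
    -- Nat.card ψ.range = orderOf ψ
    have : IsCyclic ψ.range := subgroup_units_cyclic _
    obtain ⟨t, ht⟩ := IsCyclic.exists_generator (α := ψ.range)
    have h1 : orderOf t = Nat.card ψ.range := orderOf_eq_card_of_forall_mem_zpowers ht
    have hdvd1 : r ∣ Nat.card ψ.range := by
      apply orderOf_dvd_of_pow_eq_one
      ext x
      have h2 : (⟨ψ x, ⟨x, rfl⟩⟩ : ψ.range) ^ Nat.card ψ.range = 1 := pow_card_eq_one'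
      have h3 := congrArg (Subtype.val) h2
      push_cast at h3
      simp only [MonoidHom.pow_apply, MonoidHom.one_apply]
      exact_mod_cast h3
    have hdvd2 : Nat.card ψ.range ∣ r := by
      rw [← h1]
      obtain ⟨x, hx⟩ := t.2
      apply orderOf_dvd_of_pow_eq_one
      have : (ψ x) ^ r = 1 := by
        have := congrFun (congrArg (fun f : K →* ℂˣ => (f : K → ℂˣ)) (pow_orderOf_eq_one ψ)) x
        simpa only [MonoidHom.pow_apply, MonoidHom.one_apply] using this
      apply Subtype.ext
      push_cast
      rw [hx] at this
      simpa using this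
    exact Nat.dvd_antisymm hdvd2 hdvd1
  -- fiberwise product over the quotient
  have hfiber := Finset.prod_fiberwise Finset.univ (QuotientGroup.mk (s := N))
    (fun x : K => (1 - ((ψ x : ℂˣ) : ℂ) * z))
  rw [← hfiber]
  have hfibercard : ∀ q : K ⧸ N, ({x ∈ Finset.univ | QuotientGroup.mk x = q} : Finset K).card
      = Fintype.card K / r := by
    intro q
    obtain ⟨x₀, rfl⟩ := QuotientGroup.mk_surjective q
    have : ({x ∈ Finset.univ | (QuotientGroup.mk x : K ⧸ N) = QuotientGroup.mk x₀} : Finset K).card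
        = Nat.card N := by
      rw [← Nat.card_eq_finsetCard]
      refine Nat.card_congr ?_
      refine { toFun := fun a => ⟨x₀⁻¹ * a.1, ?_⟩, invFun := fun n => ⟨x₀ * n.1, ?_⟩,
               left_inv := ?_, right_inv := ?_ }
      · have ha : (QuotientGroup.mk a.1 : K ⧸ N) = QuotientGroup.mk x₀ :=
          (Finset.mem_filter.mp a.2).2
        exact QuotientGroup.eq.mp ha.symm
      · have : x₀⁻¹ * (x₀ * n.1) ∈ N := by
          simpa [mul_assoc] using n.2
        simp only [Finset.mem_coe, Finset.mem_filter, Finset.mem_univ, true_and]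
        exact (QuotientGroup.eq.mpr this).symm
      · intro a; ext; simp
      · intro n; ext; simp
    rw [this]
    -- Nat.card N = Fintype.card K / r
    have hKeq : Nat.card K = Nat.card (K ⧸ N) * Nat.card N :=
      Subgroup.card_eq_card_quotient_mul_card_subgroup N
    rw [hQcard] at hKeq
    rw [Nat.card_eq_fintype_card] at hKeq
    rw [hKeq, Nat.mul_div_cancel_left _ hr0]
  calc ∏ q : K ⧸ N, ∏ x ∈ Finset.univ with QuotientGroup.mk x = q, (1 - ((ψ x : ℂˣ) : ℂ) * z)
      = ∏ q : K ⧸ N, (1 - ((ψ' q : ℂˣ) : ℂ) * z) ^ (Fintype.card K / r) := by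
        refine Finset.prod_congr rfl fun q _ => ?_
        rw [← hfibercard q]
        refine Finset.prod_eq_pow_card fun x hx => ?_
        rw [Finset.mem_filter] at hx
        rw [← hx.2]
        rw [hψ', QuotientGroup.kerLift_mk]
    _ = (∏ q : K ⧸ N, (1 - ((ψ' q : ℂˣ) : ℂ) * z)) ^ (Fintype.card K / r) := by
        rw [Finset.prod_pow]
    _ = (1 - z ^ r) ^ (Fintype.card K / r) := by
        congr 1
        have hprim := Complex.isPrimitiveRoot_exp r hr0.ne'
        have hinj' : Function.Injective (fun q : K ⧸ N => ((ψ' q : ℂˣ) : ℂ)) :=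
          fun a b h => hinj (Units.ext h)
        have hmaps : ∀ q : K ⧸ N, ((ψ' q : ℂˣ) : ℂ) ∈ nthRootsFinset r (1 : ℂ) := by
          intro q
          rw [mem_nthRootsFinset hr0]
          have hq : q ^ r = 1 := by rw [← hQcard]; exact pow_card_eq_one'
          rw [← Units.val_pow_eq_pow_val, ← map_pow, hq, map_one, Units.val_one]
        have himg : Finset.univ.image (fun q : K ⧸ N => ((ψ' q : ℂˣ) : ℂ))
            = nthRootsFinset r (1 : ℂ) := by
          apply Finset.eq_of_subset_of_card_le
          · intro ζ hζ
            obtain ⟨q, _, rfl⟩ := Finset.mem_image.mp hζ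
            exact hmaps q
          · rw [Finset.card_image_of_injective _ hinj', hprim.card_nthRootsFinset,
              Finset.card_univ, ← Nat.card_eq_fintype_card, hQcard]
        calc ∏ q : K ⧸ N, (1 - ((ψ' q : ℂˣ) : ℂ) * z)
            = ∏ ζ ∈ Finset.univ.image (fun q : K ⧸ N => ((ψ' q : ℂˣ) : ℂ)), (1 - ζ * z) :=
              (Finset.prod_image (f := fun ζ : ℂ => 1 - ζ * z)
                (fun a _ b _ h => hinj' h)).symm
          _ = ∏ ζ ∈ nthRootsFinset r (1 : ℂ), (1 - ζ * z) := by rw [himg]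
          _ = 1 - z ^ r := prod_nthRoots_one_sub_mul r hr0 z


/-- Lemma 4.2 for characters trivial on a subgroup: let `G` be a finite abelian group,
`H ≤ G`, `g ∈ G`, and `r` the order of the image of `g` in `G ⧸ H`. Then for every
`z ∈ ℂ`, the product over all characters `χ : G →* ℂˣ` trivial on `H` of `(1 − χ(g)·z)`
equals `(1 − z^r)^([G:H]/r)`. -/
theorem prod_characters_trivial_on_subgroup {G : Type*} [CommGroup G] [Finite G]
    (H : Subgroup G) (g : G) (r : ℕ)
    (hr : orderOf (QuotientGroup.mk g : G ⧸ H) = r) (z : ℂ) :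
    (∏ᶠ χ : {χ : G →* ℂˣ // ∀ h ∈ H, χ h = 1}, (1 - ((χ : G →* ℂˣ) g : ℂ) * z))
      = (1 - z ^ r) ^ (H.index / r) := by
  classical
  set Q := G ⧸ H with hQ
  have hexp : NeZero (Monoid.exponent Q) := ⟨Monoid.exponent_ne_zero_of_finite⟩
  have hexpC : NeZero ((Monoid.exponent Q : ℂ)) := ⟨Nat.cast_ne_zero.mpr hexp.out⟩
  have hfin : Finite (Q →* ℂˣ) :=
    Finite.of_equiv Q (CommGroup.monoidHom_mulEquiv_of_hasEnoughRootsOfUnity Q ℂ).some.symm.toEquiv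
  have hfintype : Fintype (Q →* ℂˣ) := Fintype.ofFinite _
  -- the equivalence between characters trivial on `H` and characters of `Q`
  let e : {χ : G →* ℂˣ // ∀ h ∈ H, χ h = 1} ≃ (Q →* ℂˣ) :=
    { toFun := fun χ =>
        QuotientGroup.lift H χ.1 (fun x hx => MonoidHom.mem_ker.mpr (χ.2 x hx))
      invFun := fun ψ => ⟨ψ.comp (QuotientGroup.mk' H), fun h hh => by
        have h1 : (QuotientGroup.mk' H) h = 1 := (QuotientGroup.eq_one_iff h).mpr hh
        rw [MonoidHom.comp_apply, h1, map_one]⟩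
      left_inv := fun χ => Subtype.ext (MonoidHom.ext fun x => rfl)
      right_inv := fun ψ => MonoidHom.ext fun q =>
        QuotientGroup.induction_on q fun x => rfl }
  have hfin' : Finite {χ : G →* ℂˣ // ∀ h ∈ H, χ h = 1} := Finite.of_equiv _ e.symm
  have hfintype' : Fintype {χ : G →* ℂˣ // ∀ h ∈ H, χ h = 1} := Fintype.ofFinite _
  rw [finprod_eq_prod_of_fintype]
  -- transport the product along `e`
  have hstep : ∏ χ : {χ : G →* ℂˣ // ∀ h ∈ H, χ h = 1}, (1 - ((χ : G →* ℂˣ) g : ℂ) * z)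
      = ∏ ψ : Q →* ℂˣ, (1 - ((ψ (QuotientGroup.mk g) : ℂˣ) : ℂ) * z) := by
    refine Fintype.prod_equiv e _ _ fun χ => ?_
    rfl
  rw [hstep]
  -- evaluation character on the character group
  let ev : (Q →* ℂˣ) →* ℂˣ :=
    { toFun := fun ψ => ψ (QuotientGroup.mk g)
      map_one' := rfl
      map_mul' := fun ψ₁ ψ₂ => rfl }
  have hord : orderOf ev = r := by
    rw [← hr]
    apply orderOf_eq_orderOf_iff.mpr
    intro n
    constructor
    · intro hn
      by_contra hne
      obtain ⟨φ, hφ⟩ := CommGroup.exists_apply_ne_one_of_hasEnoughRootsOfUnity Q ℂ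
        (a := (QuotientGroup.mk g : Q) ^ n) hne
      apply hφ
      have := congrFun (congrArg (fun f : (Q →* ℂˣ) →* ℂˣ => (f : (Q →* ℂˣ) → ℂˣ)) hn) φ
      simp only [MonoidHom.pow_apply, MonoidHom.one_apply] at this
      rw [map_pow]
      exact this
    · intro hn
      ext ψ
      have h2 : ev ψ ^ n = 1 := by
        show (ψ (QuotientGroup.mk g)) ^ n = 1
        rw [← map_pow, hn, map_one]
      simp only [MonoidHom.pow_apply, MonoidHom.one_apply, h2, Units.val_one]
  have hcard : Fintype.card (Q →* ℂˣ) = H.index := by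
    rw [← Nat.card_eq_fintype_card,
      Nat.card_congr (CommGroup.monoidHom_mulEquiv_of_hasEnoughRootsOfUnity Q ℂ).some.toEquiv]
    rfl
  have := prod_one_sub_char ev z
  rw [hord, hcard] at this
  exact this
end

section
/- Let m ≥ 1 and let p be an integer coprime to m, with r the multiplicative order of p modulo m. Then for every z ∈ ℂ, the product over all Dirichlet characters χ modulo m with values in ℂ of (1 − χ(p)·z) equals (1 − z^r)^{φ(m)/r}, where φ is Euler's totient function. -/
open Finset Polynomial Pointwise

/-- Product of `1 - ζ * z` over all `r`-th roots of unity in `ℂ` equals `1 - z ^ r`. -/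
private lemma prod_nthRootsFinset_one_sub_mul {r : ℕ} (hr : 0 < r) (z : ℂ) :
    ∏ ζ ∈ nthRootsFinset r (1 : ℂ), (1 - ζ * z) = 1 - z ^ r := by
  have hprim := Complex.isPrimitiveRoot_exp r hr.ne'
  have key : ∀ w : ℂ, ∏ ζ ∈ nthRootsFinset r (1 : ℂ), (w - ζ) = w ^ r - 1 := by
    intro w
    have := congrArg (Polynomial.eval w) (X_pow_sub_one_eq_prod hr hprim)
    simpa [Polynomial.eval_prod] using this.symm
  have hneg : ∏ ζ ∈ nthRootsFinset r (1 : ℂ), (-ζ) = -1 := by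
    have := key 0
    simpa [zero_pow hr.ne'] using this
  have hbij : ∏ ζ ∈ nthRootsFinset r (1 : ℂ), (z - ζ⁻¹) = ∏ ζ ∈ nthRootsFinset r (1 : ℂ), (z - ζ) := by
    refine Finset.prod_nbij' (fun ζ => ζ⁻¹) (fun ζ => ζ⁻¹) ?_ ?_ ?_ ?_ ?_
    · intro a ha
      rw [mem_nthRootsFinset hr] at ha ⊢
      show a⁻¹ ^ r = 1
      rw [inv_pow, ha, inv_one]
    · intro a ha
      rw [mem_nthRootsFinset hr] at ha ⊢
      show a⁻¹ ^ r = 1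
      rw [inv_pow, ha, inv_one]
    · intro a ha; simp
    · intro a ha; simp
    · intro a ha; rfl
  have hfactor : ∀ ζ ∈ nthRootsFinset r (1 : ℂ), (1 - ζ * z) = (-ζ) * (z - ζ⁻¹) := by
    intro ζ hζ
    have hζ0 : ζ ≠ 0 := ne_zero_of_mem_nthRootsFinset one_ne_zero hζ
    field_simp
    ring
  calc ∏ ζ ∈ nthRootsFinset r (1 : ℂ), (1 - ζ * z)
      = ∏ ζ ∈ nthRootsFinset r (1 : ℂ), ((-ζ) * (z - ζ⁻¹)) := Finset.prod_congr rfl hfactor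
    _ = (∏ ζ ∈ nthRootsFinset r (1 : ℂ), (-ζ)) * ∏ ζ ∈ nthRootsFinset r (1 : ℂ), (z - ζ⁻¹) :=
        Finset.prod_mul_distrib
    _ = (-1) * (z ^ r - 1) := by rw [hneg, hbij, key]
    _ = 1 - z ^ r := by ring

/-- Lemma 4.2 for Dirichlet characters: let `m ≥ 1`, `p` an integer coprime to `m`, and
`r` the multiplicative order of `p` modulo `m`. Then for every `z ∈ ℂ`, the product over
all Dirichlet characters `χ` modulo `m` of `(1 − χ(p)·z)` equals `(1 − z^r)^(φ(m)/r)`. -/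
theorem prod_dirichletCharacters_one_sub_mul (m : ℕ) (hm : 0 < m)
    (p : ℤ) (hp : IsCoprime p (m : ℤ)) (r : ℕ)
    (hr : orderOf ((p : ZMod m)) = r) (z : ℂ) :
    (∏ᶠ χ : DirichletCharacter ℂ m, (1 - χ (p : ZMod m) * z))
      = (1 - z ^ r) ^ (Nat.totient m / r) := by
  classical
  haveI : NeZero m := ⟨hm.ne'⟩
  -- `p` is a unit mod `m`
  have hu : IsUnit ((p : ZMod m)) := by
    have h1 : IsCoprime ((p : ℤ) : ZMod m) (((m : ℤ) : ZMod m)) :=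
      hp.map (Int.castRingHom (ZMod m))
    rw [Int.cast_natCast, ZMod.natCast_self] at h1
    exact isCoprime_zero_right.mp (by exact_mod_cast h1)
  set u := hu.unit with hudef
  have huval : (u : ZMod m) = (p : ZMod m) := hu.unit_spec
  have hru : orderOf u = r := by rw [← hr, ← huval, orderOf_units]
  have hrpos : 0 < r := hru ▸ orderOf_pos u
  haveI : NeZero r := ⟨hrpos.ne'⟩
  haveI : NeZero ((Monoid.exponent (ZMod m)ˣ : ℕ) : ℂ) :=
    ⟨Nat.cast_ne_zero.mpr Monoid.exponent_ne_zero_of_finite⟩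
  -- the evaluation homomorphism
  let f : DirichletCharacter ℂ m →* ℂˣ :=
    (MonoidHom.eval u).comp MulChar.mulEquivToUnitHom.toMonoidHom
  have hfval : ∀ χ : DirichletCharacter ℂ m, ((f χ : ℂˣ) : ℂ) = χ (p : ZMod m) := by
    intro χ
    show ((χ.toUnitHom u : ℂˣ) : ℂ) = χ (p : ZMod m)
    rw [MulChar.coe_toUnitHom, huval]
  -- the range of `f` is the group of `r`-th roots of unity
  have hle : f.range ≤ rootsOfUnity r ℂ := by
    rintro w ⟨χ, rfl⟩
    rw [mem_rootsOfUnity]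
    show (χ.toUnitHom u) ^ r = 1
    rw [← map_pow, ← hru, pow_orderOf_eq_one, map_one]
  have hprim := Complex.isPrimitiveRoot_exp r hrpos.ne'
  have hcardRoots : Nat.card (rootsOfUnity r ℂ) = r := by
    rw [hprim.card_rootsOfUnity]
  have hdvd1 : Nat.card f.range ∣ r := hcardRoots ▸ Subgroup.card_dvd_of_le hle
  have hdvd2 : r ∣ Nat.card f.range := by
    set d := Nat.card f.range with hd
    have hχd : ∀ χ : DirichletCharacter ℂ m, χ (↑(u ^ d)) = 1 := by
      intro χ
      have h1 : (⟨f χ, ⟨χ, rfl⟩⟩ : f.range) ^ d = 1 := pow_card_eq_one'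
      have h2 : (f χ) ^ d = 1 := by simpa using congrArg Subtype.val h1
      have : ((f χ : ℂˣ) : ℂ) ^ d = 1 := by rw [← Units.val_pow_eq_pow_val, h2, Units.val_one]
      rw [hfval] at this
      rw [Units.val_pow_eq_pow_val, huval, map_pow, this]
    have hud : (↑(u ^ d) : ZMod m) = 1 := by
      by_contra hne
      obtain ⟨χ, hχ⟩ := DirichletCharacter.exists_apply_ne_one_of_hasEnoughRootsOfUnity
        (R := ℂ) (n := m) hne
      exact hχ (hχd χ)
    have : u ^ d = 1 := Units.ext (by rw [hud, Units.val_one])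
    rw [← hru]
    exact orderOf_dvd_of_pow_eq_one this
  have hcardRange : Nat.card f.range = r := Nat.dvd_antisymm hdvd1 hdvd2
  have hrange : f.range = rootsOfUnity r ℂ := by
    refine Subgroup.eq_of_le_of_card_ge hle ?_
    rw [hcardRange, hcardRoots]
  -- cardinality of the kernel
  have hcardD : Nat.card (DirichletCharacter ℂ m) = m.totient :=
    DirichletCharacter.card_eq_totient_of_hasEnoughRootsOfUnity ℂ m
  have hker : Nat.card f.ker * r = m.totient := by
    rw [← hcardD, ← hcardRange, Subgroup.card_eq_card_quotient_mul_card_subgroup f.ker,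
      Nat.card_congr (QuotientGroup.quotientKerEquivRange f).toEquiv, mul_comm]
  have hkerval : Nat.card f.ker = m.totient / r := by
    rw [← hker, Nat.mul_div_cancel _ hrpos]
  -- fibers of `f` all have the cardinality of the kernel
  have hfib : ∀ w ∈ Finset.univ.image f,
      (Finset.univ.filter fun χ => f χ = w).card = Nat.card f.ker := by
    intro w hw
    obtain ⟨χ₀, -, rfl⟩ := Finset.mem_image.mp hw
    have hset : ((Finset.univ.filter fun χ => f χ = f χ₀) : Set (DirichletCharacter ℂ m))
        = χ₀ • (f.ker : Set (DirichletCharacter ℂ m)) := by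
      ext χ
      simp only [Finset.coe_filter, Set.mem_setOf_eq, Finset.mem_univ, true_and,
        Set.mem_smul_set_iff_inv_smul_mem, SetLike.mem_coe, MonoidHom.mem_ker,
        smul_eq_mul, map_mul, map_inv]
      constructor
      · intro h; rw [h, inv_mul_cancel]
      · intro h
        have := congrArg (fun x => f χ₀ * x) h
        simpa [← mul_assoc, mul_inv_cancel] using this
    calc (Finset.univ.filter fun χ => f χ = f χ₀).card
        = ((Finset.univ.filter fun χ => f χ = f χ₀) :
            Set (DirichletCharacter ℂ m)).ncard := (Set.ncard_coe_finset _).symm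
      _ = (χ₀ • (f.ker : Set (DirichletCharacter ℂ m))).ncard := by rw [hset]
      _ = (f.ker : Set (DirichletCharacter ℂ m)).ncard := Set.ncard_smul_set _ _
      _ = Nat.card f.ker := by rw [← Nat.card_coe_set_eq]; rfl
  -- the image of `f` corresponds to `nthRootsFinset r (1 : ℂ)`
  have himage : ∀ w : ℂˣ, w ∈ Finset.univ.image f ↔ ((w : ℂ) ∈ nthRootsFinset r (1 : ℂ)) := by
    intro w
    rw [mem_nthRootsFinset hrpos]
    constructor
    · intro hw
      obtain ⟨χ, -, rfl⟩ := Finset.mem_image.mp hw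
      have : f χ ∈ rootsOfUnity r ℂ := hle ⟨χ, rfl⟩
      rw [mem_rootsOfUnity] at this
      simpa using congrArg Units.val this
    · intro hw
      have hwmem : w ∈ rootsOfUnity r ℂ := by
        rw [mem_rootsOfUnity]
        exact Units.ext (by rw [Units.val_pow_eq_pow_val, hw, Units.val_one])
      rw [← hrange] at hwmem
      obtain ⟨χ, hχ⟩ := hwmem
      exact Finset.mem_image.mpr ⟨χ, Finset.mem_univ χ, hχ⟩
  -- now compute the product
  rw [finprod_eq_prod_of_fintype]
  calc ∏ χ : DirichletCharacter ℂ m, (1 - χ (p : ZMod m) * z)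
      = ∏ χ : DirichletCharacter ℂ m, (1 - ((f χ : ℂˣ) : ℂ) * z) := by
        refine Finset.prod_congr rfl fun χ _ => ?_
        rw [hfval]
    _ = ∏ w ∈ Finset.univ.image f, (1 - ((w : ℂˣ) : ℂ) * z)
          ^ (Finset.univ.filter fun χ => f χ = w).card :=
        Finset.prod_comp (fun w : ℂˣ => 1 - ((w : ℂˣ) : ℂ) * z) f
    _ = ∏ w ∈ Finset.univ.image f, (1 - ((w : ℂˣ) : ℂ) * z) ^ (m.totient / r) := by
        refine Finset.prod_congr rfl fun w hw => ?_
        rw [hfib w hw, hkerval]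
    _ = ∏ ζ ∈ nthRootsFinset r (1 : ℂ), (1 - ζ * z) ^ (m.totient / r) := by
        refine Finset.prod_bij (fun w _ => (w : ℂ)) ?_ ?_ ?_ ?_
        · intro w hw; exact (himage w).mp hw
        · intro a _ b _ h; exact Units.ext h
        · intro ζ hζ
          rw [mem_nthRootsFinset hrpos] at hζ
          have hζu : IsUnit ζ := by
            refine IsUnit.of_mul_eq_one (a := ζ) (ζ ^ (r - 1)) ?_
            rw [← pow_succ', Nat.sub_add_cancel hrpos, hζ]
          refine ⟨hζu.unit, ?_, hζu.unit_spec⟩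
          refine (himage hζu.unit).mpr ?_
          rw [hζu.unit_spec, mem_nthRootsFinset hrpos, hζ]
        · intro w _; rfl
    _ = (∏ ζ ∈ nthRootsFinset r (1 : ℂ), (1 - ζ * z)) ^ (m.totient / r) :=
        Finset.prod_pow _ _ _
    _ = (1 - z ^ r) ^ (m.totient / r) := by rw [prod_nthRootsFinset_one_sub_mul hrpos z]
end

section
/- Let G be a finite abelian group, g ∈ G an element of order r, and λ₁, λ₂, t ∈ ℂ. Then the product over all group homomorphisms χ : G → ℂˣ of (1 − (λ₁ + λ₂)·χ(g)·t + λ₁λ₂·(χ(g)·t)²) equals ((1 − λ₁^r·t^r)·(1 − λ₂^r·t^r))^{|G|/r}. -/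
open Finset


/-- Character-product factorization of quadratic Euler factors: for a finite abelian group
`G`, `g ∈ G` of order `r`, and `λ₁, λ₂, t ∈ ℂ`, the product over all characters
`χ : G →* ℂˣ` of `(1 − (λ₁+λ₂)·χ(g)·t + λ₁λ₂·(χ(g)·t)²)` equals
`((1 − λ₁^r t^r)(1 − λ₂^r t^r))^(|G|/r)`. -/
theorem prod_characters_quadratic_factors {G : Type*} [CommGroup G] [Finite G]
    (g : G) (r : ℕ) (hr : orderOf g = r) (l₁ l₂ t : ℂ) :
    (∏ᶠ χ : G →* ℂˣ,
        (1 - (l₁ + l₂) * ((χ g : ℂ) * t) + l₁ * l₂ * ((χ g : ℂ) * t) ^ 2))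
      = ((1 - l₁ ^ r * t ^ r) * (1 - l₂ ^ r * t ^ r)) ^ (Nat.card G / r) := by
  classical
  subst hr
  set r := orderOf g with hr
  have hrpos : 0 < r := orderOf_pos g
  haveI : NeZero ((Monoid.exponent G : ℂ)) :=
    ⟨Nat.cast_ne_zero.mpr Monoid.exponent_ne_zero_of_finite⟩
  obtain ⟨e⟩ := CommGroup.monoidHom_mulEquiv_of_hasEnoughRootsOfUnity G ℂ
  haveI : Finite (G →* ℂˣ) := Finite.of_equiv G e.symm.toEquiv
  haveI : Fintype (G →* ℂˣ) := Fintype.ofFinite _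
  have hcardD : Nat.card (G →* ℂˣ) = Nat.card G := Nat.card_congr e.toEquiv
  set ev : (G →* ℂˣ) →* ℂˣ :=
    { toFun := fun χ => χ g, map_one' := rfl, map_mul' := fun _ _ => rfl } with hev
  haveI : Finite ev.range := Set.Finite.to_subtype (Set.finite_range ev)
  have hpow : ∀ χ : G →* ℂˣ, (χ g) ^ r = 1 := fun χ => by
    rw [← map_pow, pow_orderOf_eq_one, map_one]
  have hd : Nat.card ev.range = r := by
    have hdvd1 : Nat.card ev.range ∣ r := by
      haveI : IsCyclic ev.range := subgroup_units_cyclic _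
      rw [← IsCyclic.exponent_eq_card]
      refine Monoid.exponent_dvd_of_forall_pow_eq_one fun x => ?_
      obtain ⟨χ, hχ⟩ := x.2
      have hx : (x : ℂˣ) ^ r = 1 := by rw [← hχ]; exact hpow χ
      exact Subtype.ext (by rw [SubgroupClass.coe_pow, hx, OneMemClass.coe_one])
    have key : ∀ χ : G →* ℂˣ, χ g ^ Nat.card ev.range = 1 := fun χ => by
      have h := pow_card_eq_one' (x := (⟨ev χ, ⟨χ, rfl⟩⟩ : ev.range))
      have h2 := congrArg Subtype.val h
      simpa [hev] using h2
    have hdvd2 : r ∣ Nat.card ev.range := by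
      rw [hr]
      refine orderOf_dvd_of_pow_eq_one ?_
      by_contra hne
      obtain ⟨χ, hχ⟩ :=
        CommGroup.exists_apply_ne_one_of_hasEnoughRootsOfUnity G ℂ hne
      exact hχ (by rw [map_pow]; exact key χ)
    exact Nat.dvd_antisymm hdvd1 hdvd2
  -- kernel cardinality
  set k := Nat.card ev.ker with hk
  have hNk : Nat.card G = r * k := by
    rw [← hcardD, Subgroup.card_eq_card_quotient_mul_card_subgroup ev.ker, ← hd, ← hk]
    congr 1
    exact Nat.card_congr (QuotientGroup.quotientKerEquivRange ev).toEquiv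
  -- fiber cardinality
  have hker_card : (univ.filter fun ψ : G →* ℂˣ => ψ ∈ ev.ker).card = k := by
    rw [hk, Nat.card_eq_fintype_card, Fintype.card_subtype]
  have hfiber : ∀ χ₀ : G →* ℂˣ,
      (univ.filter fun χ : G →* ℂˣ => ((χ g : ℂˣ) : ℂ) = ((χ₀ g : ℂˣ) : ℂ)).card = k := by
    intro χ₀
    rw [← hker_card]
    refine Finset.card_nbij' (fun χ => χ₀⁻¹ * χ) (fun ψ => χ₀ * ψ) ?_ ?_ ?_ ?_
    · intro χ hχ
      simp only [mem_coe, mem_filter, mem_univ, true_and] at hχ ⊢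
      have hval : χ g = χ₀ g := Units.ext hχ
      have : ev (χ₀⁻¹ * χ) = 1 := by
        show (χ₀⁻¹ * χ) g = 1
        rw [MonoidHom.mul_apply, MonoidHom.inv_apply, hval, inv_mul_cancel]
      exact this
    · intro ψ hψ
      simp only [mem_coe, mem_filter, mem_univ, true_and] at hψ ⊢
      have h1 : ψ g = 1 := hψ
      show (((χ₀ * ψ) g : ℂˣ) : ℂ) = ((χ₀ g : ℂˣ) : ℂ)
      rw [MonoidHom.mul_apply, h1, mul_one]
    · intro χ _; exact mul_inv_cancel_left χ₀ χ
    · intro ψ _; exact inv_mul_cancel_left χ₀ ψ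
  -- the image finset is the set of r-th roots of unity
  have hprim : IsPrimitiveRoot (Complex.exp (2 * Real.pi * Complex.I / r)) r :=
    Complex.isPrimitiveRoot_exp r hrpos.ne'
  set S : Finset ℂ := univ.image (fun χ : G →* ℂˣ => ((χ g : ℂˣ) : ℂ)) with hS
  have hScard : S.card = r := by
    have hinj : Function.Injective (fun u : ℂˣ => (u : ℂ)) := fun _ _ h => Units.ext h
    have h1 : S = (univ.image ev).image (fun u : ℂˣ => (u : ℂ)) := by
      rw [hS, Finset.image_image]; rfl
    rw [h1, Finset.card_image_of_injective _ hinj, ← hd]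
    have h2 : (ev.range : Set ℂˣ) = ↑(univ.image ev) := by
      ext x
      simp [MonoidHom.mem_range, eq_comm]
    rw [← SetLike.coe_sort_coe, h2, Nat.card_coe_set_eq, Set.ncard_coe_finset]
  have hSroots : S = Polynomial.nthRootsFinset r (1 : ℂ) := by
    refine Finset.eq_of_subset_of_card_le ?_ ?_
    · intro z hz
      rw [hS, Finset.mem_image] at hz
      obtain ⟨χ, _, rfl⟩ := hz
      rw [Polynomial.mem_nthRootsFinset hrpos]
      have := hpow χ
      calc ((χ g : ℂˣ) : ℂ) ^ r = (((χ g) ^ r : ℂˣ) : ℂ) := by push_cast; ring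
        _ = 1 := by rw [this, Units.val_one]
    · rw [hScard, hprim.card_nthRootsFinset]
  -- main computation
  rw [finprod_eq_prod_of_fintype]
  set F : ℂ → ℂ := fun z => (1 - z * (l₁ * t)) * (1 - z * (l₂ * t)) with hF
  have step1 : ∀ χ : G →* ℂˣ,
      (1 - (l₁ + l₂) * ((χ g : ℂ) * t) + l₁ * l₂ * ((χ g : ℂ) * t) ^ 2)
        = F ((χ g : ℂˣ) : ℂ) := fun χ => by rw [hF]; ring
  calc (∏ χ : G →* ℂˣ, (1 - (l₁ + l₂) * ((χ g : ℂ) * t) + l₁ * l₂ * ((χ g : ℂ) * t) ^ 2))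
      = ∏ χ : G →* ℂˣ, F ((χ g : ℂˣ) : ℂ) := Finset.prod_congr rfl fun χ _ => step1 χ
    _ = ∏ z ∈ S, F z ^ (univ.filter fun χ : G →* ℂˣ => ((χ g : ℂˣ) : ℂ) = z).card :=
        Finset.prod_comp F (fun χ : G →* ℂˣ => ((χ g : ℂˣ) : ℂ))
    _ = ∏ z ∈ S, F z ^ k := by
        refine Finset.prod_congr rfl fun z hz => ?_
        rw [hS, Finset.mem_image] at hz
        obtain ⟨χ₀, _, rfl⟩ := hz
        rw [hfiber χ₀]
    _ = (∏ z ∈ S, F z) ^ k := Finset.prod_pow S k F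
    _ = ((1 - l₁ ^ r * t ^ r) * (1 - l₂ ^ r * t ^ r)) ^ k := by
        rw [hSroots, hF]
        rw [Finset.prod_mul_distrib]
        have e1 : ∏ z ∈ Polynomial.nthRootsFinset r (1 : ℂ), (1 - z * (l₁ * t)) = 1 - l₁ ^ r * t ^ r := by
          rw [← hprim.pow_sub_pow_eq_prod_sub_mul 1 (l₁ * t) hrpos, one_pow, mul_pow]
        have e2 : ∏ z ∈ Polynomial.nthRootsFinset r (1 : ℂ), (1 - z * (l₂ * t)) = 1 - l₂ ^ r * t ^ r := by
          rw [← hprim.pow_sub_pow_eq_prod_sub_mul 1 (l₂ * t) hrpos, one_pow, mul_pow]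
        rw [e1, e2]
    _ = ((1 - l₁ ^ r * t ^ r) * (1 - l₂ ^ r * t ^ r)) ^ (Nat.card G / r) := by
        rw [hNk, Nat.mul_div_cancel_left _ hrpos]
end

section
/- Let G be a finite abelian group, g ∈ G an element of order r with r ≥ 2, let λ₁, λ₂ ∈ ℂ, and let a : ℕ → ℂ be the sequence with a(0) = 1, a(1) = λ₁ + λ₂, and a(n+2) = (λ₁ + λ₂)·a(n+1) − λ₁λ₂·a(n) for all n ≥ 0. Set d = λ₁λ₂. Then for every t ∈ ℂ, the product over all group homomorphisms χ : G → ℂˣ of (1 − a(1)·χ(g)·t + d·(χ(g)·t)²) equals (1 − (a(r) − d·a(r−2))·t^r + d^r·t^{2r})^{|G|/r}. -/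
open Finset Polynomial in
lemma euler_aux_prod {G : Type*} [CommGroup G] [Finite G]
    (g : G) (r : ℕ) (hr : orderOf g = r) (hr0 : 0 < r) (l t : ℂ) :
    ∏ᶠ χ : G →* ℂˣ, (1 - l * ((χ g : ℂ) * t)) = (1 - l ^ r * t ^ r) ^ (Nat.card G / r) := by
  classical
  haveI : NeZero ((Monoid.exponent G : ℂ)) :=
    ⟨Nat.cast_ne_zero.mpr Monoid.exponent_ne_zero_of_finite⟩
  obtain ⟨e⟩ := CommGroup.monoidHom_mulEquiv_of_hasEnoughRootsOfUnity G ℂ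
  haveI : Finite (G →* ℂˣ) := Finite.of_equiv G e.toEquiv.symm
  letI : Fintype (G →* ℂˣ) := Fintype.ofFinite _
  rw [finprod_eq_prod_of_fintype]
  set ev : (G →* ℂˣ) →* ℂˣ := MonoidHom.eval g with hev
  -- injectivity of the double-dual map
  have hinj : Function.Injective (MonoidHom.eval (M := G) (N := ℂˣ)) := by
    rw [injective_iff_map_eq_one]
    intro x hx
    by_contra hx1
    obtain ⟨φ, hφ⟩ := CommGroup.exists_apply_ne_one_of_hasEnoughRootsOfUnity G ℂ hx1
    exact hφ (by simpa using DFunLike.congr_fun hx φ)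
  have hord : orderOf ev = r := by rw [hev, orderOf_injective _ hinj g, hr]
  -- u : evaluation with values in ℂ
  set U : (G →* ℂˣ) →* ℂ := (Units.coeHom ℂ).comp ev with hU
  have hmapsto : ∀ χ : G →* ℂˣ, U χ ∈ nthRootsFinset r (1 : ℂ) := by
    intro χ
    rw [Polynomial.mem_nthRootsFinset hr0]
    have h1 : (χ g) ^ r = 1 := by rw [← map_pow, ← hr, pow_orderOf_eq_one, map_one]
    show ((χ g : ℂˣ) : ℂ) ^ r = 1
    simpa using congrArg Units.val h1
  -- the range subgroup
  haveI : Finite ev.range := Finite.of_surjective _ ev.rangeRestrict_surjective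
  have hexp : Monoid.exponent ev.range = orderOf ev := by
    refine Nat.dvd_antisymm ?_ ?_
    · refine Monoid.exponent_dvd_of_forall_pow_eq_one fun y => ?_
      obtain ⟨y, χ, rfl⟩ := y
      have h1 : (ev ^ orderOf ev) χ = 1 := by rw [pow_orderOf_eq_one]; rfl
      have h2 : ev χ ^ orderOf ev = 1 := by simpa only [MonoidHom.pow_apply] using h1
      exact Subtype.ext (by push_cast; exact h2)
    · refine orderOf_dvd_of_pow_eq_one (MonoidHom.ext fun χ => ?_)
      have h1 := Monoid.pow_exponent_eq_one (⟨ev χ, χ, rfl⟩ : ev.range)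
      have h2 : ev χ ^ Monoid.exponent ev.range = 1 := by
        simpa using congrArg Subtype.val h1
      simpa [MonoidHom.pow_apply] using h2
  have hcardrange : Nat.card ev.range = r := by
    rw [← IsCyclic.exponent_eq_card, hexp, hord]
  -- identify the image finset with the nth roots of unity
  have hcardim : (Finset.univ.image ev).card = r := by
    have hset : (ev.range : Set ℂˣ) = ↑(Finset.univ.image ev) := by
      rw [MonoidHom.coe_range, Finset.coe_image, Finset.coe_univ, Set.image_univ]
    have hcoe : Nat.card ev.range = Nat.card ((ev.range : Set ℂˣ)) := rfl
    rw [← hcardrange, hcoe, hset, Nat.card_coe_set_eq, Set.ncard_coe_finset]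
  have hcardimU : (Finset.univ.image (⇑U)).card = r := by
    have : Finset.univ.image (⇑U) = (Finset.univ.image ev).image Units.val := by
      rw [Finset.image_image]; rfl
    rw [this, Finset.card_image_of_injective _ Units.val_injective, hcardim]
  have hζ : IsPrimitiveRoot (Complex.exp (2 * Real.pi * Complex.I / r)) r :=
    Complex.isPrimitiveRoot_exp r hr0.ne'
  have hrange : Finset.univ.image (⇑U) = nthRootsFinset r (1 : ℂ) := by
    apply Finset.eq_of_subset_of_card_le
    · intro y hy
      obtain ⟨χ, _, rfl⟩ := Finset.mem_image.mp hy
      exact hmapsto χ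
    · rw [hζ.card_nthRootsFinset, hcardimU]
  -- all fibers have the same cardinality
  have hfib : ∀ y ∈ Finset.univ.image (⇑U),
      (Finset.univ.filter fun χ => U χ = y).card = Nat.card G / r := by
    have hconst : ∀ y ∈ Finset.univ.image (⇑U),
        (Finset.univ.filter fun χ => U χ = y).card
          = (Finset.univ.filter fun χ => U χ = U 1).card := by
      intro y hy
      obtain ⟨χ, _, rfl⟩ := Finset.mem_image.mp hy
      exact MonoidHom.card_fiber_eq_of_mem_range U ⟨χ, rfl⟩ ⟨1, rfl⟩
    have hcardD : Fintype.card (G →* ℂˣ) = Nat.card G := by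
      rw [← Nat.card_eq_fintype_card]
      exact Nat.card_congr e.toEquiv
    have hsum : Fintype.card (G →* ℂˣ)
        = ∑ y ∈ Finset.univ.image (⇑U), (Finset.univ.filter fun χ => U χ = y).card := by
      rw [← Finset.card_univ]
      exact Finset.card_eq_sum_card_fiberwise fun χ _ => Finset.mem_image_of_mem _ (mem_univ χ)
    have hNr : Nat.card G
        = r * (Finset.univ.filter fun χ => U χ = U 1).card := by
      rw [← hcardD, hsum, Finset.sum_congr rfl hconst, Finset.sum_const, ← hcardimU]
      simp [mul_comm]
    intro y hy
    rw [hconst y hy, hNr, Nat.mul_div_cancel_left _ hr0]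
  -- put it together
  calc ∏ χ : G →* ℂˣ, (1 - l * ((χ g : ℂ) * t))
      = ∏ y ∈ Finset.univ.image (⇑U), ∏ χ ∈ Finset.univ.filter (fun χ => U χ = y),
          (1 - l * ((χ g : ℂ) * t)) :=
        (Finset.prod_fiberwise_of_maps_to (fun χ _ => Finset.mem_image_of_mem _ (mem_univ χ)) _).symm
    _ = ∏ y ∈ Finset.univ.image (⇑U), (1 - l * (y * t)) ^ (Nat.card G / r) := by
        refine Finset.prod_congr rfl fun y hy => ?_
        rw [← hfib y hy]
        rw [Finset.prod_congr rfl (fun χ hχ => ?_), Finset.prod_const]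
        have := (Finset.mem_filter.mp hχ).2
        rw [show ((χ g : ℂ)) = y from this]
    _ = (∏ y ∈ nthRootsFinset r (1 : ℂ), (1 - l * (y * t))) ^ (Nat.card G / r) := by
        rw [hrange, Finset.prod_pow]
    _ = (1 - l ^ r * t ^ r) ^ (Nat.card G / r) := by
        congr 1
        have := hζ.pow_sub_pow_eq_prod_sub_mul (1 : ℂ) (l * t) hr0
        rw [one_pow, mul_pow] at this
        rw [this]
        exact Finset.prod_congr rfl fun y _ => by ring

/-- Local form of Theorem 4.1: with `g ∈ G` of order `r ≥ 2`, `λ₁, λ₂ ∈ ℂ`, `d = λ₁λ₂`,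
and `a` satisfying the Hecke recursion `a 0 = 1`, `a 1 = λ₁+λ₂`,
`a (n+2) = (λ₁+λ₂)·a (n+1) − d·a n`, the product over all characters `χ : G →* ℂˣ` of
`(1 − a(1)·χ(g)·t + d·(χ(g)·t)²)` equals
`(1 − (a(r) − d·a(r−2))·t^r + d^r·t^{2r})^(|G|/r)`. -/
theorem prod_characters_euler_factor {G : Type*} [CommGroup G] [Finite G]
    (g : G) (r : ℕ) (hr : orderOf g = r) (hr2 : 2 ≤ r)
    (l₁ l₂ : ℂ) (a : ℕ → ℂ)
    (h0 : a 0 = 1) (h1 : a 1 = l₁ + l₂)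
    (hrec : ∀ n : ℕ, a (n + 2) = (l₁ + l₂) * a (n + 1) - l₁ * l₂ * a n) (t : ℂ) :
    (∏ᶠ χ : G →* ℂˣ,
        (1 - a 1 * ((χ g : ℂ) * t) + (l₁ * l₂) * ((χ g : ℂ) * t) ^ 2))
      = (1 - (a r - (l₁ * l₂) * a (r - 2)) * t ^ r
            + (l₁ * l₂) ^ r * t ^ (2 * r)) ^ (Nat.card G / r) := by
  classical
  have hr0 : 0 < r := by omega
  -- the power-sum identity
  have key : ∀ n : ℕ, a (n + 2) - l₁ * l₂ * a n = l₁ ^ (n + 2) + l₂ ^ (n + 2) ∧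
      a (n + 3) - l₁ * l₂ * a (n + 1) = l₁ ^ (n + 3) + l₂ ^ (n + 3) := by
    intro n
    induction n with
    | zero =>
      refine ⟨?_, ?_⟩
      · rw [hrec 0, h1, h0]; ring
      · rw [hrec 1, hrec 0, h1, h0]; ring
    | succ n ih =>
      refine ⟨ih.2, ?_⟩
      show a (n + 4) - l₁ * l₂ * a (n + 2) = l₁ ^ (n + 4) + l₂ ^ (n + 4)
      linear_combination hrec (n + 2) + (l₁ + l₂) * ih.2 - (l₁ * l₂) * ih.1 - (l₁ * l₂) * hrec n
  have hsum : a r - l₁ * l₂ * a (r - 2) = l₁ ^ r + l₂ ^ r := by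
    obtain ⟨m, rfl⟩ : ∃ m, r = m + 2 := ⟨r - 2, by omega⟩
    simpa using (key m).1
  -- finiteness of the character group
  haveI : NeZero ((Monoid.exponent G : ℂ)) :=
    ⟨Nat.cast_ne_zero.mpr Monoid.exponent_ne_zero_of_finite⟩
  obtain ⟨e⟩ := CommGroup.monoidHom_mulEquiv_of_hasEnoughRootsOfUnity G ℂ
  haveI : Finite (G →* ℂˣ) := Finite.of_equiv G e.toEquiv.symm
  letI : Fintype (G →* ℂˣ) := Fintype.ofFinite _
  have hfac : ∀ χ : G →* ℂˣ,
      1 - a 1 * ((χ g : ℂ) * t) + (l₁ * l₂) * ((χ g : ℂ) * t) ^ 2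
        = (1 - l₁ * ((χ g : ℂ) * t)) * (1 - l₂ * ((χ g : ℂ) * t)) := by
    intro χ; rw [h1]; ring
  calc (∏ᶠ χ : G →* ℂˣ,
        (1 - a 1 * ((χ g : ℂ) * t) + (l₁ * l₂) * ((χ g : ℂ) * t) ^ 2))
      = (∏ᶠ χ : G →* ℂˣ, (1 - l₁ * ((χ g : ℂ) * t)))
          * (∏ᶠ χ : G →* ℂˣ, (1 - l₂ * ((χ g : ℂ) * t))) := by
        rw [finprod_eq_prod_of_fintype, finprod_eq_prod_of_fintype, finprod_eq_prod_of_fintype,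
          ← Finset.prod_mul_distrib]
        exact Finset.prod_congr rfl fun χ _ => hfac χ
    _ = (1 - l₁ ^ r * t ^ r) ^ (Nat.card G / r) * (1 - l₂ ^ r * t ^ r) ^ (Nat.card G / r) := by
        rw [euler_aux_prod g r hr hr0 l₁ t, euler_aux_prod g r hr hr0 l₂ t]
    _ = (1 - (a r - (l₁ * l₂) * a (r - 2)) * t ^ r
            + (l₁ * l₂) ^ r * t ^ (2 * r)) ^ (Nat.card G / r) := by
        rw [← mul_pow, hsum]
        congr 1
        ring
end
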